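/- arXiv:1405.5979 — 2 statements merged into one kernel-verified Lean document; each statement's English description precedes it below -/
import Mathlib

section
/- If A is a tropical product of lossy phone call matrices C_{i_1,j_1}(b_1) ⊙ ⋯ ⊙ C_{i_s,j_s}(b_s) and r is an index minimizing b_r among those r with i_r, j_r lying on opposite sides of a partition [n] = K ⊔ L, then a_{i_r, j_r} = a_{j_r, i_r} = b_r. -/
open scoped ENNReal

/-- Tropical (min-plus) matrix multiplication over [0,∞]. -/
noncomputable def tropMul {n : ℕ} (A B : Matrix (Fin n) (Fin n) ℝ≥0∞) :
    Matrix (Fin n) (Fin n) ℝ≥0∞ :=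
  fun i j => Finset.univ.inf fun k => A i k + B k j

/-- The tropical identity matrix: 0 on the diagonal, ∞ elsewhere. -/
noncomputable def tropId {n : ℕ} : Matrix (Fin n) (Fin n) ℝ≥0∞ :=
  fun i j => if i = j then 0 else ⊤

/-- The lossy phone call matrix C_{kl}(a): zero diagonal, value `a` at
positions (k,l) and (l,k), and ∞ elsewhere. -/
noncomputable def call {n : ℕ} (k l : Fin n) (a : ℝ≥0∞) : Matrix (Fin n) (Fin n) ℝ≥0∞ :=
  fun i j => if i = j then 0 else if (i = k ∧ j = l) ∨ (i = l ∧ j = k) then a else ⊤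

/-- The tropical product of a list of lossy phone call matrices. -/
noncomputable def prodC {n : ℕ} (l : List (Fin n × Fin n × ℝ≥0∞)) : Matrix (Fin n) (Fin n) ℝ≥0∞ :=
  (l.map fun t => call t.1 t.2.1 t.2.2).foldr tropMul tropId

lemma prodC_cons {n : ℕ} (x : Fin n × Fin n × ℝ≥0∞) (l : List (Fin n × Fin n × ℝ≥0∞)) :
    prodC (x :: l) = tropMul (call x.1 x.2.1 x.2.2) (prodC l) := rfl

lemma prodC_diag_le {n : ℕ} (l : List (Fin n × Fin n × ℝ≥0∞)) (i : Fin n) :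
    prodC l i i ≤ 0 := by
  induction l with
  | nil => simp [prodC, tropId]
  | cons x l ih =>
    calc prodC (x :: l) i i ≤ call x.1 x.2.1 x.2.2 i i + prodC l i i :=
          Finset.inf_le (Finset.mem_univ i)
    _ ≤ 0 + 0 := add_le_add (by simp [call]) ih
    _ = 0 := by simp

lemma le_prodC_cross {n : ℕ} (K : Finset (Fin n)) (b : ℝ≥0∞) :
    ∀ (l : List (Fin n × Fin n × ℝ≥0∞)),
    (∀ t' ∈ l, (t'.1 ∈ K ↔ t'.2.1 ∉ K) → b ≤ t'.2.2) →
    ∀ i j : Fin n, (i ∈ K ↔ j ∉ K) → b ≤ prodC l i j := by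
  intro l
  induction l with
  | nil =>
    intro _ i j hij
    have hne : i ≠ j := by rintro rfl; tauto
    simp [prodC, tropId, hne]
  | cons x l ih =>
    intro hb i j hij
    rw [prodC_cons]
    refine Finset.le_inf fun k _ => ?_
    by_cases hk : k ∈ K ↔ j ∉ K
    · have h2 : b ≤ prodC l k j := ih (fun t' ht' => hb t' (List.mem_cons_of_mem x ht')) k j hk
      exact le_trans h2 le_add_self
    · have hik : i ∈ K ↔ k ∉ K := by tauto
      have hne : i ≠ k := by rintro rfl; tauto
      have hcall : b ≤ call x.1 x.2.1 x.2.2 i k := by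
        unfold call
        rw [if_neg hne]
        split_ifs with h
        · rcases h with ⟨rfl, rfl⟩ | ⟨rfl, rfl⟩
          · exact hb x List.mem_cons_self hik
          · exact hb x List.mem_cons_self (by tauto)
        · exact le_top
      exact le_trans hcall le_self_add

lemma prodC_le {n : ℕ} (t : Fin n × Fin n × ℝ≥0∞) (hne : t.1 ≠ t.2.1) :
    ∀ l : List (Fin n × Fin n × ℝ≥0∞), t ∈ l →
      prodC l t.1 t.2.1 ≤ t.2.2 ∧ prodC l t.2.1 t.1 ≤ t.2.2 := by
  intro l
  induction l with
  | nil => simp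
  | cons x l ih =>
    intro ht
    rcases List.mem_cons.mp ht with rfl | ht
    · constructor
      · calc prodC (t :: l) t.1 t.2.1
            ≤ call t.1 t.2.1 t.2.2 t.1 t.2.1 + prodC l t.2.1 t.2.1 :=
              Finset.inf_le (Finset.mem_univ t.2.1)
          _ ≤ t.2.2 + 0 := add_le_add (by simp [call, hne]) (prodC_diag_le l t.2.1)
          _ = t.2.2 := add_zero _
      · calc prodC (t :: l) t.2.1 t.1
            ≤ call t.1 t.2.1 t.2.2 t.2.1 t.1 + prodC l t.1 t.1 :=
              Finset.inf_le (Finset.mem_univ t.1)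
          _ ≤ t.2.2 + 0 := add_le_add (by simp [call, hne.symm]) (prodC_diag_le l t.1)
          _ = t.2.2 := add_zero _
    · obtain ⟨h1, h2⟩ := ih ht
      constructor
      · calc prodC (x :: l) t.1 t.2.1
            ≤ call x.1 x.2.1 x.2.2 t.1 t.1 + prodC l t.1 t.2.1 :=
              Finset.inf_le (Finset.mem_univ t.1)
          _ ≤ 0 + t.2.2 := add_le_add (by simp [call]) h1
          _ = t.2.2 := zero_add _
      · calc prodC (x :: l) t.2.1 t.1
            ≤ call x.1 x.2.1 x.2.2 t.2.1 t.2.1 + prodC l t.2.1 t.1 :=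
              Finset.inf_le (Finset.mem_univ t.2.1)
          _ ≤ 0 + t.2.2 := add_le_add (by simp [call]) h2
          _ = t.2.2 := zero_add _

theorem min_crossing_call {n : ℕ}
    (l : List (Fin n × Fin n × ℝ≥0∞)) (hd : ∀ t ∈ l, t.1 ≠ t.2.1)
    (K : Finset (Fin n)) (t : Fin n × Fin n × ℝ≥0∞) (ht : t ∈ l)
    (hcross : t.1 ∈ K ↔ t.2.1 ∉ K)
    (hmin : ∀ t' ∈ l, (t'.1 ∈ K ↔ t'.2.1 ∉ K) → t.2.2 ≤ t'.2.2) :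
    prodC l t.1 t.2.1 = t.2.2 ∧ prodC l t.2.1 t.1 = t.2.2 := by
  have hne : t.1 ≠ t.2.1 := hd t ht
  obtain ⟨h1, h2⟩ := prodC_le t hne l ht
  have g1 : t.2.2 ≤ prodC l t.1 t.2.1 := le_prodC_cross K t.2.2 l hmin t.1 t.2.1 hcross
  have g2 : t.2.2 ≤ prodC l t.2.1 t.1 := le_prodC_cross K t.2.2 l hmin t.2.1 t.1 (by tauto)
  exact ⟨le_antisymm h1 g1, le_antisymm h2 g2⟩
end

section
/- Let A be a tropical product C_{I_1}(a_1) ⊙ ⋯ ⊙ C_{I_k}(a_k) of lossy phone call matrices. Then the (h,i)-entry of A, when finite, equals the minimum over all subsequences k_1 < ⋯ < k_s such that (I_{k_1}, …, I_{k_s}) forms a walk from h to i in the complete graph on [n], of the sum a_{k_1} + ⋯ + a_{k_s}; moreover a minimizing walk can be taken to visit no vertex twice, so s ≤ n−1. -/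
open scoped ENNReal

/-- The values of walks from `h` to `i` using a strictly increasing subsequence of the
factors of `l` as edges. -/
def walkValues {n : ℕ} (l : List (Fin n × Fin n × ℝ≥0∞)) (h i : Fin n) : Set ℝ≥0∞ :=
  {c | ∃ (s : ℕ) (k : Fin s → Fin l.length) (v : Fin (s + 1) → Fin n),
    StrictMono k ∧ v 0 = h ∧ v (Fin.last s) = i ∧
    (∀ r : Fin s,
      ((l.get (k r)).1 = v r.castSucc ∧ (l.get (k r)).2.1 = v r.succ) ∨
      ((l.get (k r)).1 = v r.succ ∧ (l.get (k r)).2.1 = v r.castSucc)) ∧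
    c = ∑ r : Fin s, (l.get (k r)).2.2}

section Aux

variable {n : ℕ}

/-- Bundled walk condition. -/
def WalkCond (l : List (Fin n × Fin n × ℝ≥0∞)) (h i : Fin n) (s : ℕ)
    (k : Fin s → Fin l.length) (v : Fin (s + 1) → Fin n) : Prop :=
  StrictMono k ∧ v 0 = h ∧ v (Fin.last s) = i ∧
    ∀ r : Fin s,
      ((l.get (k r)).1 = v r.castSucc ∧ (l.get (k r)).2.1 = v r.succ) ∨
      ((l.get (k r)).1 = v r.succ ∧ (l.get (k r)).2.1 = v r.castSucc)

lemma prodC_nil_apply (h i : Fin n) :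
    prodC ([] : List (Fin n × Fin n × ℝ≥0∞)) h i = tropId h i := rfl

lemma prodC_cons_apply (t : Fin n × Fin n × ℝ≥0∞) (l : List (Fin n × Fin n × ℝ≥0∞))
    (h i : Fin n) :
    prodC (t :: l) h i = Finset.univ.inf (fun m => call t.1 t.2.1 t.2.2 h m + prodC l m i) := rfl

lemma prodC_diag (l : List (Fin n × Fin n × ℝ≥0∞)) (p : Fin n) : prodC l p p = 0 := by
  induction l with
  | nil => simp [prodC_nil_apply, tropId]
  | cons t l ih =>
    refine le_antisymm ?_ zero_le
    have h1 : prodC (t :: l) p p ≤ call t.1 t.2.1 t.2.2 p p + prodC l p p := by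
      rw [prodC_cons_apply]
      exact Finset.inf_le (Finset.mem_univ p)
    simpa [call, ih] using h1

lemma get_cons_succ' (t : Fin n × Fin n × ℝ≥0∞) (l : List (Fin n × Fin n × ℝ≥0∞))
    (j : Fin l.length) : (t :: l).get j.succ = l.get j := rfl

/-- Lower bound: the entry is ≤ the value of any walk. -/
lemma prodC_le_s17 (l : List (Fin n × Fin n × ℝ≥0∞)) :
    ∀ (h i : Fin n) (s : ℕ) (k : Fin s → Fin l.length) (v : Fin (s + 1) → Fin n),
      WalkCond l h i s k v → prodC l h i ≤ ∑ r : Fin s, (l.get (k r)).2.2 := by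
  induction l with
  | nil =>
    rintro h i s k v ⟨hk, hv0, hvl, he⟩
    have hs : s = 0 := by
      rcases Nat.eq_zero_or_pos s with h' | h'
      · exact h'
      · exact absurd (k ⟨0, h'⟩).isLt (by simp)
    subst hs
    have hhi : h = i := by rw [← hv0, ← hvl]; rfl
    subst hhi
    simp [prodC_nil_apply, tropId]
  | cons t l ih =>
    intro h i s
    cases s with
    | zero =>
      rintro k v ⟨hk, hv0, hvl, he⟩
      have hhi : h = i := by rw [← hv0, ← hvl]; rfl
      subst hhi
      simp [prodC_diag]
    | succ s =>
      rintro k v ⟨hk, hv0, hvl, he⟩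
      by_cases h0 : (k 0).val = 0
      · -- the first edge used is t
        have hpos : ∀ r : Fin s, 0 < (k r.succ).val := by
          intro r
          have h1 : k 0 < k r.succ := hk (Fin.succ_pos r)
          have h2 := Fin.lt_def.mp h1
          omega
        set k' : Fin s → Fin l.length := fun r =>
          ⟨(k r.succ).val - 1, by
            have h1 : (k r.succ).val < l.length + 1 := (k r.succ).isLt
            have h2 := hpos r
            omega⟩ with hk'def
        have hget : ∀ r : Fin s, (t :: l).get (k r.succ) = l.get (k' r) := by
          intro r
          have h1 : k r.succ = (k' r).succ := by
            apply Fin.ext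
            have := hpos r
            simp only [hk'def, Fin.val_succ]
            omega
          rw [h1]
          exact get_cons_succ' t l (k' r)
        have hk0eq : (t :: l).get (k 0) = t := by
          have h1 : k 0 = ⟨0, by simp⟩ := Fin.ext (by simpa using h0)
          rw [h1]
          rfl
        have hwalk' : WalkCond l (v 1) i s k' (fun q => v q.succ) := by
          refine ⟨?_, rfl, ?_, ?_⟩
          · intro r1 r2 hlt
            have h1 := Fin.lt_def.mp (hk (Fin.succ_lt_succ_iff.mpr hlt))
            have h2 := hpos r1
            have h3 := hpos r2
            simp only [hk'def, Fin.lt_def]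
            omega
          · show v (Fin.last s).succ = i
            rw [Fin.succ_last]; exact hvl
          · intro r
            have h1 := he r.succ
            rw [hget r, ← Fin.succ_castSucc] at h1
            exact h1
        have hcall : call t.1 t.2.1 t.2.2 h (v 1) ≤ t.2.2 := by
          by_cases hhm : h = v 1
          · simp [call, ← hhm]
          · have e0 := he 0
            rw [hk0eq, Fin.castSucc_zero, Fin.succ_zero_eq_one, hv0] at e0
            have hcond : (h = t.1 ∧ v 1 = t.2.1) ∨ (h = t.2.1 ∧ v 1 = t.1) := by
              rcases e0 with ⟨e1, e2⟩ | ⟨e1, e2⟩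
              · exact Or.inl ⟨e1.symm, e2.symm⟩
              · exact Or.inr ⟨e2.symm, e1.symm⟩
            unfold call
            rw [if_neg hhm, if_pos hcond]
        rw [prodC_cons_apply]
        refine le_trans (Finset.inf_le (Finset.mem_univ (v 1))) ?_
        calc call t.1 t.2.1 t.2.2 h (v 1) + prodC l (v 1) i
            ≤ t.2.2 + ∑ r : Fin s, (l.get (k' r)).2.2 :=
              add_le_add hcall (ih (v 1) i s k' _ hwalk')
          _ = ∑ r : Fin (s + 1), ((t :: l).get (k r)).2.2 := by
              rw [Fin.sum_univ_succ, hk0eq]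
              congr 1
              exact (Finset.sum_congr rfl fun r _ => by rw [hget r]).symm
      · -- t is not used
        have hpos : ∀ r : Fin (s + 1), 0 < (k r).val := by
          intro r
          have h1 : k 0 ≤ k r := hk.monotone (Fin.zero_le r)
          have h2 := Fin.le_def.mp h1
          omega
        set k' : Fin (s + 1) → Fin l.length := fun r =>
          ⟨(k r).val - 1, by
            have h1 : (k r).val < l.length + 1 := (k r).isLt
            have h2 := hpos r
            omega⟩ with hk'def
        have hget : ∀ r : Fin (s + 1), (t :: l).get (k r) = l.get (k' r) := by
          intro r
          have h1 : k r = (k' r).succ := by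
            apply Fin.ext
            have := hpos r
            simp only [hk'def, Fin.val_succ]
            omega
          rw [h1]
          exact get_cons_succ' t l (k' r)
        have hwalk' : WalkCond l h i (s + 1) k' v := by
          refine ⟨?_, hv0, hvl, ?_⟩
          · intro r1 r2 hlt
            have h1 := Fin.lt_def.mp (hk hlt)
            have h2 := hpos r1
            have h3 := hpos r2
            simp only [hk'def, Fin.lt_def]
            omega
          · intro r
            rw [← hget r]
            exact he r
        rw [prodC_cons_apply]
        refine le_trans (Finset.inf_le (Finset.mem_univ h)) ?_
        have hc0 : call t.1 t.2.1 t.2.2 h h = 0 := by simp [call]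
        rw [hc0, zero_add]
        refine le_of_le_of_eq (ih h i (s + 1) k' v hwalk') ?_
        exact (Finset.sum_congr rfl fun r _ => by rw [hget r]).symm

/-- Attainment: the entry is ⊤ or achieved by a walk. -/
lemma prodC_mem (l : List (Fin n × Fin n × ℝ≥0∞)) (h i : Fin n) :
    prodC l h i = ⊤ ∨ ∃ s k v, WalkCond l h i s k v ∧
      prodC l h i = ∑ r : Fin s, (l.get (k r)).2.2 := by
  induction l generalizing h i with
  | nil =>
    by_cases hhi : h = i
    · right
      refine ⟨0, fun r => r.elim0, fun _ => h, ⟨fun a => a.elim0, rfl, hhi, fun r => r.elim0⟩, ?_⟩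
      simp [prodC_nil_apply, tropId, hhi]
    · left
      simp [prodC_nil_apply, tropId, hhi]
  | cons t l ih =>
    have hne : (Finset.univ : Finset (Fin n)).Nonempty := ⟨h, Finset.mem_univ h⟩
    obtain ⟨m0, -, hm0⟩ := Finset.exists_mem_eq_inf Finset.univ hne
      (fun m => call t.1 t.2.1 t.2.2 h m + prodC l m i)
    have hE : prodC (t :: l) h i = call t.1 t.2.1 t.2.2 h m0 + prodC l m0 i := by
      rw [prodC_cons_apply]; exact hm0
    rcases ih m0 i with htop | ⟨s, k, v, hw, hsum⟩
    · left; rw [hE, htop, add_top]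
    · by_cases hhm : h = m0
      · subst hhm
        right
        have hE' : prodC (t :: l) h i = prodC l h i := by
          rw [hE]; simp [call]
        refine ⟨s, fun r => (k r).succ, v, ⟨?_, hw.2.1, hw.2.2.1, ?_⟩, ?_⟩
        · intro a b hab
          exact Fin.succ_lt_succ_iff.mpr (hw.1 hab)
        · intro r
          rw [get_cons_succ' t l (k r)]
          exact hw.2.2.2 r
        · rw [hE', hsum]
          exact Finset.sum_congr rfl fun r _ => by rw [get_cons_succ' t l (k r)]
      · by_cases hc : (h = t.1 ∧ m0 = t.2.1) ∨ (h = t.2.1 ∧ m0 = t.1)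
        · have hcall : call t.1 t.2.1 t.2.2 h m0 = t.2.2 := by
            unfold call
            rw [if_neg hhm, if_pos hc]
          right
          refine ⟨s + 1, Fin.cases ⟨0, by simp⟩ (fun r => (k r).succ), Fin.cases h v,
            ⟨?_, ?_, ?_, ?_⟩, ?_⟩
          · intro a b hab
            rcases Fin.eq_zero_or_eq_succ b with rfl | ⟨b', rfl⟩
            · exact absurd hab (Fin.not_lt_zero a)
            · rcases Fin.eq_zero_or_eq_succ a with rfl | ⟨a', rfl⟩
              · simp only [Fin.cases_zero, Fin.cases_succ, Fin.lt_def, Fin.val_succ]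
                omega
              · simp only [Fin.cases_succ]
                have hab' : a' < b' := by
                  rwa [Fin.succ_lt_succ_iff] at hab
                exact Fin.succ_lt_succ_iff.mpr (hw.1 hab')
          · simp
          · rw [← Fin.succ_last]
            simp only [Fin.cases_succ]
            exact hw.2.2.1
          · intro r
            rcases Fin.eq_zero_or_eq_succ r with rfl | ⟨q, rfl⟩
            · simp only [Fin.castSucc_zero,
                show (0 : Fin (s + 1)).succ = Fin.succ 0 from rfl,
                show ((t :: l).get (Fin.cases ⟨0, by simp⟩ (fun r => (k r).succ)
                  (0 : Fin (s + 1))) : Fin n × Fin n × ℝ≥0∞) = t from rfl,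
                Fin.cases_zero, Fin.cases_succ, hw.2.1]
              rcases hc with ⟨e1, e2⟩ | ⟨e1, e2⟩
              · exact Or.inl ⟨e1.symm, e2.symm⟩
              · exact Or.inr ⟨e2.symm, e1.symm⟩
            · rw [← Fin.succ_castSucc]
              simp only [Fin.cases_succ]
              rw [get_cons_succ' t l (k q)]
              exact hw.2.2.2 q
          · rw [hE, hcall, hsum, Fin.sum_univ_succ]
            congr 1
        · left
          have hcall : call t.1 t.2.1 t.2.2 h m0 = ⊤ := by
            unfold call
            rw [if_neg hhm, if_neg hc]
          rw [hE, hcall, top_add]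

/-- Shortening: any walk can be replaced by one with injective vertices and not larger value. -/
lemma shorten (l : List (Fin n × Fin n × ℝ≥0∞)) (h i : Fin n) :
    ∀ (s : ℕ) (k : Fin s → Fin l.length) (v : Fin (s + 1) → Fin n),
      WalkCond l h i s k v →
      ∃ (s' : ℕ) (k' : Fin s' → Fin l.length) (v' : Fin (s' + 1) → Fin n),
        WalkCond l h i s' k' v' ∧ Function.Injective v' ∧
        ∑ r : Fin s', (l.get (k' r)).2.2 ≤ ∑ r : Fin s, (l.get (k r)).2.2 := by
  intro s
  induction s using Nat.strong_induction_on with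
  | _ s IH =>
    intro k v hw
    by_cases hinj : Function.Injective v
    · exact ⟨s, k, v, hw, hinj, le_rfl⟩
    · obtain ⟨a, b, hab, hvab⟩ : ∃ a b : Fin (s + 1), a < b ∧ v a = v b := by
        simp only [Function.Injective] at hinj
        push_neg at hinj
        obtain ⟨x, y, h1, h2⟩ := hinj
        rcases lt_or_gt_of_ne h2 with hlt | hgt
        · exact ⟨x, y, hlt, h1⟩
        · exact ⟨y, x, hgt, h1.symm⟩
      obtain ⟨hk, hv0, hvl, he⟩ := hw
      have hblt : b.val ≤ s := Nat.lt_succ_iff.mp b.isLt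
      have halb : a.val < b.val := Fin.lt_def.mp hab
      have hd1 : 1 ≤ b.val - a.val := by omega
      set d := b.val - a.val with hd
      set s2 := s - d with hs2
      have hads : a.val + d = b.val := by omega
      have has2 : a.val ≤ s2 := by omega
      have hs2d : s2 + d = s := by omega
      have hs2lt : s2 < s := by omega
      have hemb : ∀ q : Fin s2, (if q.val < a.val then q.val else q.val + d) < s := by
        intro q; have := q.isLt; split <;> omega
      set emb : Fin s2 → Fin s := fun q => ⟨if q.val < a.val then q.val else q.val + d, hemb q⟩
        with hembdef
      have hvemb : ∀ q : Fin (s2 + 1), (if q.val ≤ a.val then q.val else q.val + d) < s + 1 := by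
        intro q; have := q.isLt; split <;> omega
      set v2 : Fin (s2 + 1) → Fin n :=
        fun q => v ⟨if q.val ≤ a.val then q.val else q.val + d, hvemb q⟩ with hv2def
      have hvcongr : ∀ (p q : Fin (s + 1)), p.val = q.val → v p = v q :=
        fun p q hpq => congrArg v (Fin.ext hpq)
      have hembmono : StrictMono emb := by
        intro q1 q2 hlt
        have h12 : q1.val < q2.val := Fin.lt_def.mp hlt
        simp only [hembdef, Fin.lt_def]
        split <;> split <;> omega
      have hcast : ∀ r : Fin s2, v2 r.castSucc = v (emb r).castSucc := by
        intro r
        rcases lt_trichotomy r.val a.val with h1 | h1 | h1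
        · apply hvcongr
          simp only [hv2def, hembdef, Fin.coe_castSucc]
          split_ifs <;> omega
        · have e1 : v2 r.castSucc = v a := by
            apply hvcongr
            simp only [hv2def, Fin.coe_castSucc]
            split_ifs <;> omega
          have e2 : v (emb r).castSucc = v b := by
            apply hvcongr
            simp only [hembdef, Fin.coe_castSucc]
            split_ifs <;> omega
          rw [e1, e2, hvab]
        · apply hvcongr
          simp only [hv2def, hembdef, Fin.coe_castSucc]
          split_ifs <;> omega
      have hsucc : ∀ r : Fin s2, v2 r.succ = v (emb r).succ := by
        intro r
        by_cases h1 : r.val < a.val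
        · apply hvcongr
          simp only [hv2def, hembdef, Fin.val_succ, Fin.coe_castSucc]
          split_ifs <;> omega
        · apply hvcongr
          simp only [hv2def, hembdef, Fin.val_succ, Fin.coe_castSucc]
          split_ifs <;> omega
      have hwalk2 : WalkCond l h i s2 (k ∘ emb) v2 := by
        refine ⟨hk.comp hembmono, ?_, ?_, ?_⟩
        · rw [← hv0]
          apply hvcongr
          simp only [hv2def, Fin.val_zero]
          simp
        · by_cases h1 : s2 ≤ a.val
          · have e1 : v2 (Fin.last s2) = v a := by
              apply hvcongr
              simp only [hv2def, Fin.val_last]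
              split_ifs <;> omega
            have e2 : v b = v (Fin.last s) := by
              apply hvcongr
              simp only [Fin.val_last]
              omega
            rw [e1, hvab, e2, hvl]
          · have e1 : v2 (Fin.last s2) = v (Fin.last s) := by
              apply hvcongr
              simp only [hv2def, Fin.val_last]
              split_ifs <;> omega
            rw [e1, hvl]
        · intro r
          rw [hcast r, hsucc r]
          exact he (emb r)
      obtain ⟨s', k', v', hw', hinj', hle'⟩ := IH s2 hs2lt (k ∘ emb) v2 hwalk2
      refine ⟨s', k', v', hw', hinj', hle'.trans ?_⟩
      have him : ∑ q ∈ Finset.univ.image emb, (l.get (k q)).2.2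
          = ∑ q : Fin s2, (l.get ((k ∘ emb) q)).2.2 := by
        rw [Finset.sum_image (fun x _ y _ hxy => hembmono.injective hxy)]
        rfl
      rw [← him]
      exact Finset.sum_le_sum_of_subset (Finset.subset_univ _)

end Aux

theorem entry_eq_min_walk {n : ℕ}
    (l : List (Fin n × Fin n × ℝ≥0∞)) (hd : ∀ t ∈ l, t.1 ≠ t.2.1)
    (h i : Fin n) (hfin : prodC l h i ≠ ⊤) :
    prodC l h i = sInf (walkValues l h i) ∧
    ∃ (s : ℕ) (k : Fin s → Fin l.length) (v : Fin (s + 1) → Fin n),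
      StrictMono k ∧ v 0 = h ∧ v (Fin.last s) = i ∧
      (∀ r : Fin s,
        ((l.get (k r)).1 = v r.castSucc ∧ (l.get (k r)).2.1 = v r.succ) ∨
        ((l.get (k r)).1 = v r.succ ∧ (l.get (k r)).2.1 = v r.castSucc)) ∧
      Function.Injective v ∧ s ≤ n - 1 ∧
      prodC l h i = ∑ r : Fin s, (l.get (k r)).2.2 := by
  rcases prodC_mem l h i with htop | ⟨s, k, v, hw, hsum⟩
  · exact absurd htop hfin
  constructor
  · apply le_antisymm
    · refine le_sInf ?_
      rintro c ⟨s', k', v', hkm, hv0, hvl, he, rfl⟩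
      exact prodC_le_s17 l h i s' k' v' ⟨hkm, hv0, hvl, he⟩
    · exact sInf_le ⟨s, k, v, hw.1, hw.2.1, hw.2.2.1, hw.2.2.2, hsum⟩
  · obtain ⟨s', k', v', hw', hinj', hle'⟩ := shorten l h i s k v hw
    have hge : prodC l h i ≤ ∑ r : Fin s', (l.get (k' r)).2.2 := prodC_le_s17 l h i s' k' v' hw'
    have heq : prodC l h i = ∑ r : Fin s', (l.get (k' r)).2.2 :=
      le_antisymm hge (hle'.trans hsum.ge)
    have hn : s' + 1 ≤ n := by
      have hcard := Fintype.card_le_of_injective v' hinj'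
      simpa using hcard
    exact ⟨s', k', v', hw'.1, hw'.2.1, hw'.2.2.1, hw'.2.2.2, hinj', by omega, heq⟩
end
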